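/- With Q, R, J the simultaneously defined syntactic classes, for every ψ ∈ R, intuitionistic logic proves ¬_E¬ψ → ψ^E, i.e. ((ψ → False) → E) → ψ^E. -/
import Mathlib


/-- First-order formulas over a domain `α` with atomic propositions indexed by `ι`,
quantifiers rendered via higher-order abstract syntax. -/
inductive Fml (α ι : Type) : Type where
  | atom : ι → Fml α ι
  | bot : Fml α ι
  | and : Fml α ι → Fml α ι → Fml α ι
  | or : Fml α ι → Fml α ι → Fml α ι
  | imp : Fml α ι → Fml α ι → Fml α ι
  | all : (α → Fml α ι) → Fml α ι
  | ex : (α → Fml α ι) → Fml α ι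

/-- Standard semantic evaluation of a formula, given an interpretation `v` of the atoms. -/
def Fml.eval {α ι : Type} (v : ι → Prop) : Fml α ι → Prop
  | .atom i => v i
  | .bot => False
  | .and φ ψ => φ.eval v ∧ ψ.eval v
  | .or φ ψ => φ.eval v ∨ ψ.eval v
  | .imp φ ψ => φ.eval v → ψ.eval v
  | .all f => ∀ x, (f x).eval v
  | .ex f => ((∃ x, (f x).eval v))

/-- Semantic evaluation of the E-negative (Gentzen–Gödel style) translation `φ^E`:
`P^E := ¬_E¬_E P` for atoms, `⊥^E := E`, commuting with `∧`, `→`, `∀`, and with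
`¬_E¬_E` prefixed to `∨` and `∃`, where `¬_E θ := θ → E`. -/
def Fml.evalE {α ι : Type} (v : ι → Prop) (E : Prop) : Fml α ι → Prop
  | .atom i => (v i → E) → E
  | .bot => E
  | .and φ ψ => φ.evalE v E ∧ ψ.evalE v E
  | .or φ ψ => ((φ.evalE v E ∨ ψ.evalE v E) → E) → E
  | .imp φ ψ => φ.evalE v E → ψ.evalE v E
  | .all f => ∀ x, (f x).evalE v E
  | .ex f => ((∃ x, (f x).evalE v E) → E) → E

mutual
  /-- The syntactic class `Q`. -/
  inductive InQ {α ι : Type} : Fml α ι → Prop where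
    | bot : InQ .bot
    | atom (i : ι) : InQ (.atom i)
    | and {φ ψ} : InQ φ → InQ ψ → InQ (.and φ ψ)
    | or {φ ψ} : InQ φ → InQ ψ → InQ (.or φ ψ)
    | ex {f} : (∀ x, InQ (f x)) → InQ (.ex f)
    | all {f} : (∀ x, InQ (f x)) → InQ (.all f)
    | imp {φ ψ} : InJ φ → InQ ψ → InQ (.imp φ ψ)

  /-- The syntactic class `R`. -/
  inductive InR {α ι : Type} : Fml α ι → Prop where
    | bot : InR .bot
    | and {φ ψ} : InR φ → InR ψ → InR (.and φ ψ)
    | or {φ ψ} : InR φ → InR ψ → InR (.or φ ψ)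
    | all {f} : (∀ x, InR (f x)) → InR (.all f)
    | imp {φ ψ} : InJ φ → InR ψ → InR (.imp φ ψ)

  /-- The syntactic class `J`. -/
  inductive InJ {α ι : Type} : Fml α ι → Prop where
    | bot : InJ .bot
    | atom (i : ι) : InJ (.atom i)
    | and {φ ψ} : InJ φ → InJ ψ → InJ (.and φ ψ)
    | or {φ ψ} : InJ φ → InJ ψ → InJ (.or φ ψ)
    | ex {f} : (∀ x, InJ (f x)) → InJ (.ex f)
    | imp {φ ψ} : InR φ → InJ ψ → InJ (.imp φ ψ)
end

mutual
  theorem lemJ {α ι : Type} {φ : Fml α ι} (h : InJ φ) (v : ι → Prop) (E : Prop) :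
      φ.evalE v E → (φ.eval v → E) → E := by
    match h with
    | .bot => exact fun e _ => e
    | .atom i => exact fun h k => h k
    | .and h1 h2 =>
      exact fun ⟨a, b⟩ k =>
        lemJ h1 v E a (fun p => lemJ h2 v E b (fun q => k ⟨p, q⟩))
    | .or h1 h2 =>
      exact fun h k =>
        h (fun d => d.elim (fun a => lemJ h1 v E a (fun p => k (.inl p)))
                           (fun b => lemJ h2 v E b (fun q => k (.inr q))))
    | .ex hf =>
      exact fun h k =>
        h (fun ⟨x, a⟩ => lemJ (hf x) v E a (fun p => k ⟨x, p⟩))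
    | .imp h1 h2 =>
      exact fun himp k =>
        lemJ h2 v E
          (himp (lemR h1 v E (fun m => k (fun p => absurd p m))))
          (fun c => k (fun _ => c))

  theorem lemR {α ι : Type} {ψ : Fml α ι} (hψ : InR ψ) (v : ι → Prop) (E : Prop) :
      ((ψ.eval v → False) → E) → ψ.evalE v E := by
    match hψ with
    | .bot => exact fun h => h id
    | .and h1 h2 =>
      exact fun h =>
        ⟨lemR h1 v E (fun m => h (fun ⟨a, _⟩ => m a)),
         lemR h2 v E (fun m => h (fun ⟨_, b⟩ => m b))⟩
    | .or h1 h2 =>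
      exact fun h k =>
        k (.inl (lemR h1 v E (fun m =>
          k (.inr (lemR h2 v E (fun n =>
            h (fun d => d.elim m n)))))))
    | .all hf =>
      exact fun h x =>
        lemR (hf x) v E (fun m => h (fun g => m (g x)))
    | .imp h1 h2 =>
      exact fun h a =>
        lemR h2 v E (fun m =>
          lemJ h1 v E a (fun p => h (fun g => m (g p))))
end

/-- For `ψ ∈ R`, intuitionistic logic proves `¬_E¬ψ → ψ^E`. -/
theorem stmt14 {α ι : Type} (ψ : Fml α ι) (hψ : InR ψ) (v : ι → Prop) (E : Prop) :
    ((ψ.eval v → False) → E) → ψ.evalE v E := lemR hψ v E
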